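/- Let p and q be distinct primes and let k ≥ 1. The integer n = q·p^k is non-intersecting if and only if k = 1 or p > 2. -/
import Mathlib

private lemma overlap_dvd' {d d' m : ℕ} {α β : ℤ} (hm : m ∣ d) (hm' : m ∣ d')
    (h : ∃ x : ℤ, x ≡ α [ZMOD (d : ℤ)] ∧ x ≡ β [ZMOD (d' : ℤ)]) : (m : ℤ) ∣ α - β := by
  obtain ⟨x, h1, h2⟩ := h
  have h1' : x ≡ α [ZMOD (m : ℤ)] := h1.of_dvd (Int.natCast_dvd_natCast.mpr hm)
  have h2' : x ≡ β [ZMOD (m : ℤ)] := h2.of_dvd (Int.natCast_dvd_natCast.mpr hm')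
  exact dvd_sub_comm.mp (h1'.symm.trans h2').dvd

private lemma not_p_dvd {p : ℕ} {c : ℤ} (hc : ¬ (p : ℤ) ∣ c) (z : ℤ) :
    ¬ (p : ℤ) ∣ (c + p * z) := fun h => hc (by simpa using h.sub (dvd_mul_right (p : ℤ) z))

private lemma not_pow_dvd {p : ℕ} (hp : p.Prime) (i : ℕ) {u : ℤ} (hu : ¬ (p : ℤ) ∣ u) :
    ¬ (p : ℤ) ^ (i + 1) ∣ (p : ℤ) ^ i * u := by
  intro h
  rw [pow_succ] at h
  have hne : ((p : ℤ)) ^ i ≠ 0 := pow_ne_zero i (by exact_mod_cast hp.pos.ne')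
  exact hu ((mul_dvd_mul_iff_left hne).mp h)

private lemma case_helper {p : ℕ} (hp : p.Prime) {d d' m : ℕ} {α β : ℤ} (c z : ℤ)
    (hm : p ^ (m + 1) ∣ d) (hm' : p ^ (m + 1) ∣ d')
    (hover : ∃ x : ℤ, x ≡ α [ZMOD (d : ℤ)] ∧ x ≡ β [ZMOD (d' : ℤ)])
    (heq : α - β = (p : ℤ) ^ m * (c + p * z))
    (hc : ¬ (p : ℤ) ∣ c) : False := by
  have h := overlap_dvd' hm hm' hover
  rw [heq] at h
  have hcast : ((p ^ (m + 1) : ℕ) : ℤ) = (p : ℤ) ^ (m + 1) := by push_cast; ring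
  rw [hcast] at h
  exact not_pow_dvd hp m (not_p_dvd hc z) h

private lemma divisor_cases {p q k : ℕ} (hp : p.Prime) (hq : q.Prime) {d : ℕ}
    (hd : d ∣ q * p ^ k) (h1 : 1 < d) :
    (∃ i, i + 1 ≤ k ∧ p ^ (i + 1) = d) ∨ q = d ∨ ∃ i, i + 1 ≤ k ∧ q * p ^ (i + 1) = d := by
  by_cases hqd : q ∣ d
  · obtain ⟨e, rfl⟩ := hqd
    have he : e ∣ p ^ k := (mul_dvd_mul_iff_left hq.pos.ne').mp hd
    obtain ⟨i, hik, rfl⟩ := (Nat.dvd_prime_pow hp).mp he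
    rcases Nat.eq_zero_or_pos i with rfl | hi
    · right; left; simp
    · right; right; exact ⟨i - 1, by omega, by rw [Nat.sub_add_cancel hi]⟩
  · have hco : Nat.Coprime d q := ((Nat.Prime.coprime_iff_not_dvd hq).mpr hqd).symm
    have hdp : d ∣ p ^ k := hco.dvd_of_dvd_mul_left hd
    obtain ⟨i, hik, rfl⟩ := (Nat.dvd_prime_pow hp).mp hdp
    rcases Nat.eq_zero_or_pos i with rfl | hi
    · simp at h1
    · left; exact ⟨i - 1, by omega, by rw [Nat.sub_add_cancel hi]⟩

private lemma fermat_dvd {p q : ℕ} (hq : q.Prime) (h : ¬ q ∣ p) (k : ℕ) :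
    (q : ℤ) ∣ 1 - (p : ℤ) ^ (k * (q - 1)) := by
  haveI := Fact.mk hq
  have hp0 : (p : ZMod q) ≠ 0 := by
    simpa [ZMod.natCast_eq_zero_iff] using h
  have h1 : (p : ZMod q) ^ (q - 1) = 1 := ZMod.pow_card_sub_one_eq_one hp0
  have h2 : ((1 - (p : ℤ) ^ (k * (q - 1)) : ℤ) : ZMod q) = 0 := by
    push_cast
    rw [mul_comm k, pow_mul, h1, one_pow]
    ring
  exact (ZMod.intCast_zmod_eq_zero_iff_dvd _ _).mp h2

/-- Let `p` and `q` be distinct primes and `k ≥ 1`. Then `n = q * p^k` is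
non-intersecting (there exist residues `a d`, one for each divisor `d > 1` of `n`, such
that `{a d mod d : d ∣ n, d > 1}` is a CD congruence set) if and only if
`k = 1` or `p > 2`. -/
theorem q_mul_prime_pow_nonintersecting_iff (p q : ℕ) (hp : p.Prime) (hq : q.Prime)
    (hpq : p ≠ q) (k : ℕ) (hk : 1 ≤ k) :
    (∃ a : ℕ → ℤ, ∀ d d' : ℕ, d ∣ q * p ^ k → d' ∣ q * p ^ k → 1 < d → 1 < d' → d ≠ d' →
      (∃ x : ℤ, x ≡ a d [ZMOD (d : ℤ)] ∧ x ≡ a d' [ZMOD (d' : ℤ)]) →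
      Nat.gcd d d' = 1) ↔ (k = 1 ∨ 2 < p) := by
  constructor
  · rintro ⟨a, ha⟩
    by_contra hcon
    push_neg at hcon
    obtain ⟨hk1, hple⟩ := hcon
    have hp2 : p = 2 := le_antisymm hple hp.two_le
    subst hp2
    have hk2 : 2 ≤ k := by omega
    have hq1 : 1 < q := hq.one_lt
    have hq2 : q ≠ 2 := fun h => hpq h.symm
    have hd2 : (2 : ℕ) ∣ q * 2 ^ k := Dvd.dvd.mul_left (dvd_pow_self 2 (by omega)) q
    have hd4 : (4 : ℕ) ∣ q * 2 ^ k := Dvd.dvd.mul_left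
      (by calc (4 : ℕ) = 2 ^ 2 := rfl
            _ ∣ 2 ^ k := pow_dvd_pow 2 hk2) q
    have hdq : q * 2 ∣ q * 2 ^ k := mul_dvd_mul_left q (dvd_pow_self 2 (by omega))
    have key : ∀ d d' : ℕ, d ∣ q * 2 ^ k → d' ∣ q * 2 ^ k → 1 < d → 1 < d' → d ≠ d' →
        Nat.gcd d d' ≠ 1 →
        ¬ ∃ x : ℤ, x ≡ a d [ZMOD (d : ℤ)] ∧ x ≡ a d' [ZMOD (d' : ℤ)] :=
      fun d d' h1 h2 h3 h4 h5 h6 hov => h6 (ha d d' h1 h2 h3 h4 h5 hov)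
    have hgcd2q : Nat.gcd 2 q = 1 := (Nat.coprime_primes Nat.prime_two hq).mpr
      (fun h => hq2 h.symm)
    have h24 : a 2 % 2 ≠ a 4 % 2 := by
      intro h
      exact key 2 4 hd2 hd4 (by norm_num) (by norm_num) (by norm_num) (by decide)
        ⟨a 4, by show a 4 % ((2:ℕ):ℤ) = a 2 % ((2:ℕ):ℤ); push_cast; exact h.symm,
          Int.ModEq.refl _⟩
    have h2q : a 2 % 2 ≠ a (q * 2) % 2 := by
      intro h
      exact key 2 (q * 2) hd2 hdq (by norm_num) (by omega) (by omega)
        (by rw [Nat.gcd_eq_left (dvd_mul_left 2 q)]; omega)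
        ⟨a (q * 2), by show a (q*2) % ((2:ℕ):ℤ) = a 2 % ((2:ℕ):ℤ); push_cast; exact h.symm,
          Int.ModEq.refl _⟩
    have h4q : a 4 % 2 ≠ a (q * 2) % 2 := by
      intro h
      have hdvd : (2 : ℤ) ∣ a (q * 2) - a 4 := Int.ModEq.dvd (show Int.ModEq 2 (a 4) (a (q*2)) from h)
      obtain ⟨w, hw⟩ := hdvd
      have hcop : Nat.gcd 4 q = 1 := by
        have : Nat.Coprime (2 ^ 2) q := Nat.Coprime.pow_left 2 hgcd2q
        simpa using this
      have hb : (4 : ℤ) * Int.gcdA 4 q + (q : ℤ) * Int.gcdB 4 q = 1 := by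
        have hg := Int.gcd_eq_gcd_ab (4 : ℤ) (q : ℤ)
        have : Int.gcd (4 : ℤ) (q : ℤ) = 1 := by
          have := Int.gcd_natCast_natCast 4 q
          rw [hcop] at this
          exact_mod_cast this
        rw [this] at hg
        exact_mod_cast hg.symm
      set u := Int.gcdA 4 q
      set v := Int.gcdB 4 q
      refine key 4 (q * 2) hd4 hdq (by norm_num) (by omega) (by omega)
        (by rw [show (4:ℕ) = 2 * 2 from rfl, show q * 2 = 2 * q from mul_comm q 2,
              Nat.gcd_mul_left, hgcd2q]; omega)
        ⟨a 4 * ((q : ℤ) * v) + a (q * 2) * (4 * u), ?_, ?_⟩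
      · rw [Int.modEq_iff_dvd]
        refine ⟨u * (a 4 - a (q * 2)), ?_⟩
        push_cast
        linear_combination (-(a 4)) * hb
      · rw [Int.modEq_iff_dvd]
        refine ⟨v * w, ?_⟩
        push_cast
        linear_combination (-(a (q * 2))) * hb + ((q : ℤ) * v) * hw
    rcases Int.emod_two_eq (a 2) with h1 | h1 <;>
      rcases Int.emod_two_eq (a 4) with h2 | h2 <;>
      rcases Int.emod_two_eq (a (q * 2)) with h3 | h3 <;>
      omega
  · intro hcase
    have hcopq : Nat.Coprime p q := (Nat.coprime_primes hp hq).mpr hpq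
    rcases hcase with rfl | hp2
    · -- k = 1
      set a0 : ℕ → ℤ := fun d => if d = q * p then 1 else 0 with ha0
      have hp1 : p ^ (0 + 1) = p := by norm_num
      have hpne : p ≠ q * p := by nlinarith [hq.two_le, hp.two_le]
      have hqne : q ≠ q * p := by nlinarith [hq.two_le, hp.two_le]
      have ha_p : a0 (p ^ (0 + 1)) = 0 := by
        simp only [ha0]
        rw [hp1, if_neg hpne]
      have ha_q : a0 q = 0 := by
        simp only [ha0]
        rw [if_neg hqne]
      have ha_qp : a0 (q * p ^ (0 + 1)) = 1 := by
        simp only [ha0]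
        rw [hp1, if_pos rfl]
      have hpd : p ∣ p ^ (0 + 1) := dvd_pow_self p (Nat.succ_ne_zero 0)
      have honeq : ¬ (q : ℤ) ∣ (0 - 1 : ℤ) := by
        intro h
        have h2 : (q : ℤ) ∣ 1 := by simpa using h
        have := Int.le_of_dvd one_pos h2
        have := hq.two_le
        omega
      have honep : ¬ (p : ℤ) ∣ (0 - 1 : ℤ) := by
        intro h
        have h2 : (p : ℤ) ∣ 1 := by simpa using h
        have := Int.le_of_dvd one_pos h2
        have := hp.two_le
        omega
      have honeq' : ¬ (q : ℤ) ∣ (1 - 0 : ℤ) := by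
        intro h
        exact honeq (by rw [show (0 - 1 : ℤ) = -(1 - 0) from by ring]; exact dvd_neg.mpr h)
      have honep' : ¬ (p : ℤ) ∣ (1 - 0 : ℤ) := by
        intro h
        exact honep (by rw [show (0 - 1 : ℤ) = -(1 - 0) from by ring]; exact dvd_neg.mpr h)
      refine ⟨a0, ?_⟩
      intro d d' hd hd' h1 h1' hne hover
      rcases divisor_cases hp hq hd h1 with ⟨i, hik, rfl⟩ | rfl | ⟨i, hik, rfl⟩ <;>
        rcases divisor_cases hp hq hd' h1' with ⟨j, hjk, rfl⟩ | rfl | ⟨j, hjk, rfl⟩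
      · obtain rfl : i = 0 := by omega
        obtain rfl : j = 0 := by omega
        exact absurd rfl hne
      · exact Nat.Coprime.pow_left _ hcopq
      · obtain rfl : i = 0 := by omega
        obtain rfl : j = 0 := by omega
        exfalso
        rw [ha_p, ha_qp] at hover
        exact honep (overlap_dvd' hpd (Dvd.dvd.mul_left hpd q) hover)
      · exact (Nat.Coprime.pow_left _ hcopq).symm
      · exact absurd rfl hne
      · obtain rfl : j = 0 := by omega
        exfalso
        rw [ha_q, ha_qp] at hover
        exact honeq (overlap_dvd' (dvd_refl q) (dvd_mul_right q _) hover)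
      · obtain rfl : i = 0 := by omega
        obtain rfl : j = 0 := by omega
        exfalso
        rw [ha_qp, ha_p] at hover
        exact honep' (overlap_dvd' (Dvd.dvd.mul_left hpd q) hpd hover)
      · obtain rfl : i = 0 := by omega
        exfalso
        rw [ha_qp, ha_q] at hover
        exact honeq' (overlap_dvd' (dvd_mul_right q _) (dvd_refl q) hover)
      · obtain rfl : i = 0 := by omega
        obtain rfl : j = 0 := by omega
        exact absurd rfl hne
    · -- 2 < p
      haveI := Fact.mk hp
      have hqp : ¬ q ∣ p := fun h => hpq ((Nat.prime_dvd_prime_iff_eq hq hp).mp h).symm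
      have hpdq : ¬ p ∣ q := fun h => hpq ((Nat.prime_dvd_prime_iff_eq hp hq).mp h)
      have hKpos : 1 ≤ k * (q - 1) := by
        have := hq.two_le
        have h1 : 1 ≤ q - 1 := by omega
        calc 1 = 1 * 1 := rfl
          _ ≤ k * (q - 1) := Nat.mul_le_mul hk h1
      set KK := k * (q - 1) - 1 with hKKdef
      have hKK : k * (q - 1) = KK + 1 := by omega
      have hferm : (q : ℤ) ∣ 1 - (p : ℤ) ^ (KK + 1) := by
        rw [← hKK]; exact fermat_dvd hq hqp k
      set a : ℕ → ℤ := fun d =>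
        if d = q then 1
        else if q ∣ d then 2 * (p : ℤ) ^ (padicValNat p d - 1) * (1 - (p : ℤ) ^ (KK + 1))
        else (p : ℤ) ^ (padicValNat p d - 1) with ha_def
      have hnd1 : ¬ (p : ℤ) ∣ (1 : ℤ) := by
        intro h
        have := Int.le_of_dvd one_pos h
        have := hp.two_le
        omega
      have hndm1 : ¬ (p : ℤ) ∣ (-1 : ℤ) := fun h => hnd1 (dvd_neg.mp h)
      have hnd2 : ¬ (p : ℤ) ∣ (2 : ℤ) := by
        intro h
        have := Int.le_of_dvd (by norm_num) h
        omega
      have hndm2 : ¬ (p : ℤ) ∣ (-2 : ℤ) := fun h => hnd2 (dvd_neg.mp h)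
      have hA : ∀ i : ℕ, a (p ^ (i + 1)) = (p : ℤ) ^ i := by
        intro i
        have h1 : p ^ (i + 1) ≠ q := by
          intro h
          exact hpdq (h ▸ dvd_pow_self p (Nat.succ_ne_zero i))
        have h2 : ¬ q ∣ p ^ (i + 1) := fun h => hqp (hq.dvd_of_dvd_pow h)
        simp [ha_def, h1, h2, padicValNat.prime_pow]
      have hB : a q = 1 := by simp [ha_def]
      have hC : ∀ i : ℕ, a (q * p ^ (i + 1)) = 2 * (p : ℤ) ^ i * (1 - (p : ℤ) ^ (KK + 1)) := by
        intro i
        have hgt : 1 < p ^ (i + 1) := Nat.one_lt_pow (Nat.succ_ne_zero i) hp.one_lt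
        have h1 : q * p ^ (i + 1) ≠ q := by
          intro h
          have h2 : q * p ^ (i + 1) = q * 1 := by rw [h, mul_one]
          have := Nat.eq_of_mul_eq_mul_left hq.pos h2
          omega
        have h2 : q ∣ q * p ^ (i + 1) := dvd_mul_right q _
        have hval : padicValNat p (q * p ^ (i + 1)) = i + 1 := by
          rw [padicValNat.mul hq.pos.ne' (pow_ne_zero _ hp.pos.ne'),
            padicValNat.eq_zero_of_not_dvd hpdq, padicValNat.prime_pow, zero_add]
        simp [ha_def, h1, h2, hval]
      refine ⟨a, ?_⟩
      intro d d' hd hd' h1 h1' hne hover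
      rcases divisor_cases hp hq hd h1 with ⟨i, hik, rfl⟩ | rfl | ⟨i, hik, rfl⟩ <;>
        rcases divisor_cases hp hq hd' h1' with ⟨j, hjk, rfl⟩ | rfl | ⟨j, hjk, rfl⟩
      · -- p^(i+1), p^(j+1)
        exfalso
        have hij : i ≠ j := fun h => hne (by rw [h])
        rw [hA i, hA j] at hover
        rcases lt_or_gt_of_ne hij with hlt | hgt
        · obtain ⟨t, rfl⟩ : ∃ t, j = i + (t + 1) := ⟨j - i - 1, by omega⟩
          exact case_helper hp 1 (-(p : ℤ) ^ t) (dvd_refl (p ^ (i + 1)))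
            (pow_dvd_pow p (by omega)) hover (by push_cast; ring) hnd1
        · obtain ⟨t, rfl⟩ : ∃ t, i = j + (t + 1) := ⟨i - j - 1, by omega⟩
          exact case_helper hp (-1) ((p : ℤ) ^ t) (pow_dvd_pow p (by omega))
            (dvd_refl (p ^ (j + 1))) hover (by push_cast; ring) hndm1
      · -- p^(i+1), q
        exact Nat.Coprime.pow_left _ hcopq
      · -- p^(i+1), q*p^(j+1)
        exfalso
        rw [hA i, hC j] at hover
        rcases lt_trichotomy i j with hlt | rfl | hgt
        · obtain ⟨t, rfl⟩ : ∃ t, j = i + (t + 1) := ⟨j - i - 1, by omega⟩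
          exact case_helper hp 1 (-(2 * (p : ℤ) ^ t) + 2 * (p : ℤ) ^ (t + KK + 1))
            (dvd_refl (p ^ (i + 1))) ((pow_dvd_pow p (by omega)).mul_left q) hover
            (by push_cast; ring) hnd1
        · exact case_helper hp (-1) (2 * (p : ℤ) ^ KK) (dvd_refl (p ^ (i + 1)))
            ((dvd_refl (p ^ (i + 1))).mul_left q) hover (by push_cast; ring) hndm1
        · obtain ⟨t, rfl⟩ : ∃ t, i = j + (t + 1) := ⟨i - j - 1, by omega⟩
          exact case_helper hp (-2) ((p : ℤ) ^ t + 2 * (p : ℤ) ^ KK)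
            (pow_dvd_pow p (by omega)) ((dvd_refl (p ^ (j + 1))).mul_left q) hover
            (by push_cast; ring) hndm2
      · -- q, p^(j+1)
        exact (Nat.Coprime.pow_left _ hcopq).symm
      · exact absurd rfl hne
      · -- q, q*p^(j+1)
        exfalso
        rw [hB, hC j] at hover
        have hdvd := overlap_dvd' (dvd_refl q) (dvd_mul_right q (p ^ (j + 1))) hover
        have h2 := hferm.mul_left (2 * (p : ℤ) ^ j)
        have hone : (q : ℤ) ∣ 1 := by
          have h3 := dvd_add hdvd h2
          simpa using h3
        have := Int.le_of_dvd one_pos hone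
        have := hq.two_le
        omega
      · -- q*p^(i+1), p^(j+1)
        exfalso
        rw [hC i, hA j] at hover
        rcases lt_trichotomy i j with hlt | rfl | hgt
        · obtain ⟨t, rfl⟩ : ∃ t, j = i + (t + 1) := ⟨j - i - 1, by omega⟩
          exact case_helper hp 2 (-(2 * (p : ℤ) ^ KK) - (p : ℤ) ^ t)
            ((dvd_refl (p ^ (i + 1))).mul_left q) (pow_dvd_pow p (by omega)) hover
            (by push_cast; ring) hnd2
        · exact case_helper hp 1 (-(2 * (p : ℤ) ^ KK))
            ((dvd_refl (p ^ (i + 1))).mul_left q) (dvd_refl (p ^ (i + 1))) hover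
            (by push_cast; ring) hnd1
        · obtain ⟨t, rfl⟩ : ∃ t, i = j + (t + 1) := ⟨i - j - 1, by omega⟩
          exact case_helper hp (-1) (2 * (p : ℤ) ^ t - 2 * (p : ℤ) ^ (t + KK + 1))
            ((pow_dvd_pow p (by omega)).mul_left q) (dvd_refl (p ^ (j + 1))) hover
            (by push_cast; ring) hndm1
      · -- q*p^(i+1), q
        exfalso
        rw [hC i, hB] at hover
        have hdvd := overlap_dvd' (dvd_mul_right q (p ^ (i + 1))) (dvd_refl q) hover
        have h2 := hferm.mul_left (2 * (p : ℤ) ^ i)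
        have hone : (q : ℤ) ∣ 1 := by
          have h3 := dvd_sub h2 hdvd
          simpa using h3
        have := Int.le_of_dvd one_pos hone
        have := hq.two_le
        omega
      · -- q*p^(i+1), q*p^(j+1)
        exfalso
        have hij : i ≠ j := fun h => hne (by rw [h])
        rw [hC i, hC j] at hover
        rcases lt_or_gt_of_ne hij with hlt | hgt
        · obtain ⟨t, rfl⟩ : ∃ t, j = i + (t + 1) := ⟨j - i - 1, by omega⟩
          exact case_helper hp 2
            (-(2 * (p : ℤ) ^ KK) - 2 * (p : ℤ) ^ t + 2 * (p : ℤ) ^ (t + KK + 1))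
            ((dvd_refl (p ^ (i + 1))).mul_left q) ((pow_dvd_pow p (by omega)).mul_left q)
            hover (by push_cast; ring) hnd2
        · obtain ⟨t, rfl⟩ : ∃ t, i = j + (t + 1) := ⟨i - j - 1, by omega⟩
          exact case_helper hp (-2)
            (2 * (p : ℤ) ^ KK + 2 * (p : ℤ) ^ t - 2 * (p : ℤ) ^ (t + KK + 1))
            ((pow_dvd_pow p (by omega)).mul_left q) ((dvd_refl (p ^ (j + 1))).mul_left q)
            hover (by push_cast; ring) hndm2
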